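/- For any separable two-qubit state ρ (a convex combination of projectors onto product unit vectors), tr(ρ Φᵢ) ≤ 1/2 for each i ∈ {1,2,3,4}, where Φᵢ = |Φᵢ⟩⟨Φᵢ| is the projector onto the i-th Bell vector. -/

import Mathlib

open Matrix Complex BigOperators
open scoped ComplexOrder

noncomputable section

/-- Standard basis ket of ℂ⁴ -/
def ket (k : Fin 4) : Fin 4 → ℂ := fun j => if j = k then 1 else 0

/-- Tensor product of two qubit vectors, with |ij⟩ ↦ index 2i+j -/
def tens (ψ χ : Fin 2 → ℂ) : Fin 4 → ℂ :=
  ![ψ 0 * χ 0, ψ 0 * χ 1, ψ 1 * χ 0, ψ 1 * χ 1]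

/-- Outer product |v⟩⟨v| -/
def proj (v : Fin 4 → ℂ) : Matrix (Fin 4) (Fin 4) ℂ :=
  Matrix.of fun i j => v i * star (v j)

/-- A qubit vector is a unit vector -/
def unit2 (ψ : Fin 2 → ℂ) : Prop := ∑ j, Complex.normSq (ψ j) = 1

/-- The four Bell vectors -/
def Bell : Fin 4 → (Fin 4 → ℂ) :=
  ![![1 / (Real.sqrt 2 : ℂ), 0, 0, 1 / (Real.sqrt 2 : ℂ)],
    ![1 / (Real.sqrt 2 : ℂ), 0, 0, -(1 / (Real.sqrt 2 : ℂ))],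
    ![0, 1 / (Real.sqrt 2 : ℂ), 1 / (Real.sqrt 2 : ℂ), 0],
    ![0, -(1 / (Real.sqrt 2 : ℂ)), 1 / (Real.sqrt 2 : ℂ), 0]]

/-- Bell projectors Φᵢ (indexed from 0: `Phi 0` is Φ₁, etc.) -/
def Phi (i : Fin 4) : Matrix (Fin 4) (Fin 4) ℂ := proj (Bell i)

/-- Separability of a two-qubit (4×4) matrix -/
def IsSepState (ρ : Matrix (Fin 4) (Fin 4) ℂ) : Prop :=
  ∃ (n : ℕ) (p : Fin n → ℝ) (ψ χ : Fin n → Fin 2 → ℂ),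
    (∀ i, 0 ≤ p i) ∧ (∑ i, p i = 1) ∧ (∀ i, unit2 (ψ i)) ∧ (∀ i, unit2 (χ i)) ∧
    ρ = ∑ i, (p i : ℂ) • proj (tens (ψ i) (χ i))

/-- Density matrix -/
def IsState (ρ : Matrix (Fin 4) (Fin 4) ℂ) : Prop := ρ.PosSemidef ∧ ρ.trace = 1

lemma key_cs (x y z w : ℂ) : Complex.normSq (x*y + z*w) ≤
    (Complex.normSq x + Complex.normSq z) * (Complex.normSq y + Complex.normSq w) := by
  have h1 : ‖x*y+z*w‖ ≤ ‖x‖ * ‖y‖ + ‖z‖ * ‖w‖ := by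
    simpa [norm_mul] using norm_add_le (x*y) (z*w)
  have e : ∀ u : ℂ, Complex.normSq u = ‖u‖^2 := fun u => (Complex.sq_norm u).symm
  rw [e, e, e, e, e]
  have a0 := norm_nonneg (x*y+z*w)
  have a1 := norm_nonneg x
  have a2 := norm_nonneg y
  have a3 := norm_nonneg z
  have a4 := norm_nonneg w
  nlinarith [sq_nonneg (‖x‖ * ‖w‖ - ‖z‖ * ‖y‖)]

lemma normSq_inv_sqrt2 : Complex.normSq (1/(Real.sqrt 2:ℂ)) = 1/2 := by
  have h2 : Real.sqrt 2 ≠ 0 := by positivity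
  rw [show (1/(Real.sqrt 2:ℂ)) = ((1/Real.sqrt 2 : ℝ) : ℂ) by push_cast; ring,
    Complex.normSq_ofReal]
  rw [div_mul_div_comm, Real.mul_self_sqrt (by norm_num)]
  norm_num

lemma bound_aux (x y z w : ℂ) (h : Complex.normSq x + Complex.normSq z = 1)
    (h2 : Complex.normSq y + Complex.normSq w = 1) :
    Complex.normSq ((1/(Real.sqrt 2:ℂ)) * (x*y + z*w)) ≤ 1/2 := by
  rw [Complex.normSq_mul, normSq_inv_sqrt2]
  have := key_cs x y z w
  rw [h, h2] at this
  linarith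

lemma trace_proj (B v : Fin 4 → ℂ) :
    (proj B * proj v).trace = (∑ b, star (B b) * v b) * star (∑ b, star (B b) * v b) := by
  simp only [proj, Matrix.trace, Matrix.diag, Matrix.mul_apply, Matrix.of_apply,
    Fin.sum_univ_four, star_add, star_mul', star_star]
  ring

lemma re_mul_star (z : ℂ) : (z * star z).re = Complex.normSq z := by
  rw [show star z = (starRingEnd ℂ) z from rfl, Complex.mul_conj, Complex.ofReal_re]

lemma term_le (i : Fin 4) (ψ χ : Fin 2 → ℂ) (hψ : unit2 ψ) (hχ : unit2 χ) :
    ((Phi i * proj (tens ψ χ)).trace).re ≤ 1/2 := by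
  have hψ' : Complex.normSq (ψ 0) + Complex.normSq (ψ 1) = 1 := by
    simpa [unit2, Fin.sum_univ_two] using hψ
  have hχ' : Complex.normSq (χ 0) + Complex.normSq (χ 1) = 1 := by
    simpa [unit2, Fin.sum_univ_two] using hχ
  fin_cases i
  · show ((Phi 0 * proj (tens ψ χ)).trace).re ≤ 1/2
    rw [Phi, trace_proj, re_mul_star]
    have hs : (∑ b, star (Bell 0 b) * tens ψ χ b)
        = (1/(Real.sqrt 2:ℂ)) * (ψ 0 * χ 0 + ψ 1 * χ 1) := by
      simp [Bell, tens, Fin.sum_univ_four]; ring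
    rw [hs]
    exact bound_aux _ _ _ _ hψ' hχ'
  · show ((Phi 1 * proj (tens ψ χ)).trace).re ≤ 1/2
    rw [Phi, trace_proj, re_mul_star]
    have hs : (∑ b, star (Bell 1 b) * tens ψ χ b)
        = (1/(Real.sqrt 2:ℂ)) * (ψ 0 * χ 0 + (-(ψ 1)) * χ 1) := by
      simp [Bell, tens, Fin.sum_univ_four]; ring
    rw [hs]
    exact bound_aux _ _ _ _ (by rw [Complex.normSq_neg]; exact hψ') hχ'
  · show ((Phi 2 * proj (tens ψ χ)).trace).re ≤ 1/2
    rw [Phi, trace_proj, re_mul_star]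
    have hs : (∑ b, star (Bell 2 b) * tens ψ χ b)
        = (1/(Real.sqrt 2:ℂ)) * (ψ 0 * χ 1 + ψ 1 * χ 0) := by
      simp [Bell, tens, Fin.sum_univ_four]; ring
    rw [hs]
    exact bound_aux _ _ _ _ hψ' (by rw [add_comm]; exact hχ')
  · show ((Phi 3 * proj (tens ψ χ)).trace).re ≤ 1/2
    rw [Phi, trace_proj, re_mul_star]
    have hs : (∑ b, star (Bell 3 b) * tens ψ χ b)
        = (1/(Real.sqrt 2:ℂ)) * ((-(ψ 0)) * χ 1 + ψ 1 * χ 0) := by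
      simp [Bell, tens, Fin.sum_univ_four]; ring
    rw [hs]
    exact bound_aux _ _ _ _ (by rw [Complex.normSq_neg]; exact hψ')
      (by rw [add_comm]; exact hχ')

/-- separable states have overlap at most 1/2 with each Bell projector. -/
theorem sep_bell_fidelity_le_half (ρ : Matrix (Fin 4) (Fin 4) ℂ) (hρ : IsSepState ρ)
    (i : Fin 4) : ((Phi i * ρ).trace).re ≤ 1 / 2 := by
  obtain ⟨n, p, ψ, χ, hp, hp1, hψ, hχ, rfl⟩ := hρ
  have htr : (Phi i * ∑ j, (p j : ℂ) • proj (tens (ψ j) (χ j))).trace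
      = ∑ j, (p j : ℂ) * (Phi i * proj (tens (ψ j) (χ j))).trace := by
    rw [Finset.mul_sum, Matrix.trace_sum]
    congr 1; ext j
    rw [Matrix.mul_smul, Matrix.trace_smul, smul_eq_mul]
  rw [htr, Complex.re_sum]
  calc ∑ j, ((p j : ℂ) * (Phi i * proj (tens (ψ j) (χ j))).trace).re
      ≤ ∑ j, p j * (1/2) := by
        apply Finset.sum_le_sum
        intro j _
        rw [show ((p j : ℂ) * (Phi i * proj (tens (ψ j) (χ j))).trace).re
            = p j * ((Phi i * proj (tens (ψ j) (χ j))).trace).re by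
          rw [Complex.mul_re, Complex.ofReal_re, Complex.ofReal_im]; ring]
        exact mul_le_mul_of_nonneg_left (term_le i _ _ (hψ j) (hχ j)) (hp j)
    _ = 1/2 := by rw [← Finset.sum_mul, hp1, one_mul]
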